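/- If the product measures built from two preparations have zero overlap on the n-fold product space, then the two preparations already have zero overlap. Concretely: let μ₀ and μ₁ be probability measures on a measurable space (Λ, Σ) and let n ≥ 1. For each j : Fin n → Fin 2 let π_j := Measure.pi (fun k => μ_{j k}) be the product probability measure on the product measurable space (Fin n → Λ). If the overlap L({π_j : j ∈ Fin n → Fin 2}) of this family of 2^n product measures is zero, then L(μ₀, μ₁) = 0. -/

import Mathlib

open MeasureTheory

/-- The overlap of a finite family of probability measures: the infimum, over all measurable
partitions `(Ω i)` of the space, of `∑ i, μ i (Ω i)`. -/
noncomputable def familyOverlap {Λ : Type*} [MeasurableSpace Λ] {ι : Type*} [Fintype ι]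
    (μ : ι → Measure Λ) : ℝ :=
  ⨅ P : {P : ι → Set Λ // (∀ i, MeasurableSet (P i)) ∧
      Pairwise (Function.onFun Disjoint P) ∧ (⋃ i, P i) = Set.univ},
    ∑ i, (μ i (P.1 i)).toReal

/-- The overlap of a pair of probability measures: `inf_Ω (μ(Ω) + ν(Ωᶜ))` over measurable
sets `Ω`. -/
noncomputable def pairOverlap {Λ : Type*} [MeasurableSpace Λ] (μ ν : Measure Λ) : ℝ :=
  ⨅ Ω : {s : Set Λ // MeasurableSet s}, ((μ Ω.1).toReal + (ν Ω.1ᶜ).toReal)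

/-- Monotonicity of finite product measures. -/
theorem pi_mono_aux {ι : Type*} [Fintype ι] {α : ι → Type*} [∀ i, MeasurableSpace (α i)]
    (ν μ : ∀ i, Measure (α i)) [∀ i, SigmaFinite (ν i)] [∀ i, SigmaFinite (μ i)]
    (h : ∀ i, ν i ≤ μ i) : Measure.pi ν ≤ Measure.pi μ := by
  have hout : (Measure.pi ν).toOuterMeasure ≤
      OuterMeasure.pi fun i => (μ i).toOuterMeasure := by
    rw [OuterMeasure.le_pi]
    intro s _
    calc (Measure.pi ν).toOuterMeasure (Set.pi Set.univ s)
        = Measure.pi ν (Set.pi Set.univ s) := rfl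
      _ = ∏ i, ν i (s i) := Measure.pi_pi ν s
      _ ≤ ∏ i, μ i (s i) := Finset.prod_le_prod' fun i _ => Measure.le_iff'.mp (h i) (s i)
  rw [Measure.le_iff]
  intro A hA
  calc Measure.pi ν A ≤ (OuterMeasure.pi fun i => (μ i).toOuterMeasure) A := hout A
    _ = Measure.pi μ A := by
        rw [Measure.pi_def]; exact (toMeasure_apply _ _ hA).symm

/-- If the `2^n` product measures built from two preparations `μ 0`, `μ 1` have zero overlap
on the `n`-fold product space, then the two preparations already have zero overlap. -/
theorem stmt3 {Λ : Type*} [MeasurableSpace Λ]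
    (μ : Fin 2 → Measure Λ) [∀ i, IsProbabilityMeasure (μ i)]
    (n : ℕ) (hn : 1 ≤ n)
    (h : familyOverlap (fun j : Fin n → Fin 2 => Measure.pi (fun k => μ (j k))) = 0) :
    pairOverlap (μ 0) (μ 1) = 0 := by
  obtain ⟨s, hs, hs1, hs2⟩ := hahn_decomposition (μ := μ 0) (ν := μ 1)
  set lam : Measure Λ := (μ 1).restrict s + (μ 0).restrict sᶜ with hlamdef
  have hlam_apply : ∀ t : Set Λ, MeasurableSet t → lam t = μ 1 (t ∩ s) + μ 0 (t ∩ sᶜ) := by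
    intro t ht
    simp [hlamdef, Measure.restrict_apply ht]
  have hsplit : ∀ (i : Fin 2) (t : Set Λ), μ i (t ∩ s) + μ i (t ∩ sᶜ) = μ i t := by
    intro i t
    rw [← Set.diff_eq]
    exact measure_inter_add_diff t hs
  have hlam0 : lam ≤ μ 0 := by
    rw [Measure.le_iff]
    intro t ht
    have h1 : μ 1 (t ∩ s) ≤ μ 0 (t ∩ s) := hs1 _ (ht.inter hs) Set.inter_subset_right
    calc lam t = μ 1 (t ∩ s) + μ 0 (t ∩ sᶜ) := hlam_apply t ht
      _ ≤ μ 0 (t ∩ s) + μ 0 (t ∩ sᶜ) := add_le_add_left h1 _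
      _ = μ 0 t := hsplit 0 t
  have hlam1 : lam ≤ μ 1 := by
    rw [Measure.le_iff]
    intro t ht
    have h1 : μ 0 (t ∩ sᶜ) ≤ μ 1 (t ∩ sᶜ) := hs2 _ (ht.inter hs.compl) Set.inter_subset_right
    calc lam t = μ 1 (t ∩ s) + μ 0 (t ∩ sᶜ) := hlam_apply t ht
      _ ≤ μ 1 (t ∩ s) + μ 1 (t ∩ sᶜ) := add_le_add_right h1 _
      _ = μ 1 t := hsplit 1 t
  have hle : ∀ i : Fin 2, lam ≤ μ i := by
    intro i
    fin_cases i
    · exact hlam0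
    · exact hlam1
  have hfin : IsFiniteMeasure lam := by
    constructor
    exact lt_of_le_of_lt (Measure.le_iff'.mp hlam0 Set.univ) (measure_lt_top _ _)
  set c : ℝ := (lam Set.univ).toReal with hcdef
  have hc0 : 0 ≤ c := ENNReal.toReal_nonneg
  -- the type of partitions is nonempty
  haveI hTne : Nonempty {P : (Fin n → Fin 2) → Set (Fin n → Λ) // (∀ i, MeasurableSet (P i)) ∧
      Pairwise (Function.onFun Disjoint P) ∧ (⋃ i, P i) = Set.univ} := by
    refine ⟨⟨fun i => if i = (fun _ => 0) then Set.univ else ∅, fun i => ?_, ?_, ?_⟩⟩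
    · by_cases hi : i = (fun _ => 0) <;> simp [hi]
    · intro i j hij
      rcases eq_or_ne i (fun _ => 0) with hi | hi
      · have hj : j ≠ (fun _ => 0) := hi ▸ hij.symm
        simp [Function.onFun, hi, hj]
      · simp [Function.onFun, hi]
    · apply Set.eq_univ_of_univ_subset
      intro x _
      exact Set.mem_iUnion.mpr ⟨fun _ => 0, by simp⟩
  -- lower bound for the family overlap
  have hlow : c ^ n ≤ familyOverlap (fun j : Fin n → Fin 2 => Measure.pi (fun k => μ (j k))) := by
    unfold familyOverlap
    refine le_ciInf fun P => ?_
    have hpi : ∀ j : Fin n → Fin 2,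
        (Measure.pi fun _ : Fin n => lam) (P.1 j) ≤ (Measure.pi fun k => μ (j k)) (P.1 j) :=
      fun j => Measure.le_iff'.mp (pi_mono_aux _ _ fun k => hle (j k)) _
    have hsum : ∑ j, ((Measure.pi fun _ : Fin n => lam) (P.1 j)).toReal
        ≤ ∑ j, ((Measure.pi fun k => μ (j k)) (P.1 j)).toReal := by
      refine Finset.sum_le_sum fun j _ => ENNReal.toReal_mono (measure_ne_top _ _) (hpi j)
    refine le_trans (le_of_eq ?_) hsum
    have hunion : ∑ j, (Measure.pi fun _ : Fin n => lam) (P.1 j)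
        = (Measure.pi fun _ : Fin n => lam) Set.univ := by
      rw [← tsum_fintype (L := SummationFilter.unconditional _), ← measure_iUnion P.2.2.1 P.2.1, P.2.2.2]
    have huniv : (Measure.pi fun _ : Fin n => lam) Set.univ = (lam Set.univ) ^ n := by
      rw [Measure.pi_univ]
      simp [Finset.prod_const, Finset.card_univ]
    calc c ^ n = (((lam Set.univ)) ^ n).toReal := by
          rw [ENNReal.toReal_pow]
      _ = ((Measure.pi fun _ : Fin n => lam) Set.univ).toReal := by rw [huniv]
      _ = (∑ j, (Measure.pi fun _ : Fin n => lam) (P.1 j)).toReal := by rw [hunion]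
      _ = ∑ j, ((Measure.pi fun _ : Fin n => lam) (P.1 j)).toReal :=
          ENNReal.toReal_sum fun j _ => measure_ne_top _ _
  -- conclude c = 0
  have hcn : c ^ n = 0 := le_antisymm (h ▸ hlow) (pow_nonneg hc0 n)
  have hc : c = 0 := by
    have := pow_eq_zero_iff (n := n) (by omega : n ≠ 0) |>.mp hcn
    exact this
  -- pair overlap is at most c
  have hval : (μ 0 sᶜ).toReal + (μ 1 sᶜᶜ).toReal = c := by
    rw [compl_compl]
    rw [hcdef, hlam_apply Set.univ MeasurableSet.univ]
    rw [Set.univ_inter, Set.univ_inter,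
      ENNReal.toReal_add (measure_ne_top _ _) (measure_ne_top _ _)]
    ring
  have hbdd : BddBelow (Set.range fun Ω : {t : Set Λ // MeasurableSet t} =>
      ((μ 0 Ω.1).toReal + (μ 1 Ω.1ᶜ).toReal)) := by
    refine ⟨0, ?_⟩
    rintro x ⟨Ω, rfl⟩
    exact add_nonneg ENNReal.toReal_nonneg ENNReal.toReal_nonneg
  have hub : pairOverlap (μ 0) (μ 1) ≤ c := by
    rw [← hval]
    exact ciInf_le hbdd ⟨sᶜ, hs.compl⟩
  have hlb : 0 ≤ pairOverlap (μ 0) (μ 1) :=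
    Real.iInf_nonneg fun Ω => add_nonneg ENNReal.toReal_nonneg ENNReal.toReal_nonneg
  rw [hc] at hub
  linarith
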